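/- Let z > 0. For f ∈ L²(ℝ²), define (F_z f)(x,y) := ∫_{ℝ²} G³_z(x − x', x − y', y − x') f(x', y') dx' dy'. Then F_z f ∈ L²(ℝ²) and ‖F_z f‖_{L²} ≤ (2√z)^{-1} ‖f‖_{L²}; that is, the integral operator F_z on L²(ℝ²) with kernel K(x,y;x',y') = G³_z(x − x', x − y', y − x') is bounded with operator norm at most (2√z)^{-1}. -/

import Mathlib

open MeasureTheory

/-- The three-dimensional Green's function `G³_z(w) = exp(-√z |w|) / (4π |w|)`,
written in coordinates `w = (a, b, c) ∈ ℝ³`. -/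
noncomputable def green3 (z : ℝ) (a b c : ℝ) : ℝ :=
  Real.exp (-Real.sqrt z * Real.sqrt (a ^ 2 + b ^ 2 + c ^ 2)) /
    (4 * Real.pi * Real.sqrt (a ^ 2 + b ^ 2 + c ^ 2))

open Real Set

namespace FzAux

/-- Auxiliary two-dimensional radial majorant `H_z(w) = exp(-√z |w|)/(4π |w|)`. -/
noncomputable def Hfun (z : ℝ) (w : ℝ × ℝ) : ℝ :=
  Real.exp (-Real.sqrt z * Real.sqrt (w.1 ^ 2 + w.2 ^ 2)) /
    (4 * Real.pi * Real.sqrt (w.1 ^ 2 + w.2 ^ 2))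

lemma green3_nonneg (z a b c : ℝ) : 0 ≤ green3 z a b c := by
  unfold green3
  have := Real.pi_pos
  positivity

lemma aux_le (z : ℝ) {ρ r : ℝ} (hρ : 0 < ρ) (hr : ρ ≤ r) :
    Real.exp (-Real.sqrt z * r) / (4 * Real.pi * r)
      ≤ Real.exp (-Real.sqrt z * ρ) / (4 * Real.pi * ρ) := by
  have hπ := Real.pi_pos
  apply div_le_div₀ (Real.exp_pos _).le _ (by positivity) (by nlinarith)
  apply Real.exp_le_exp.mpr
  nlinarith [Real.sqrt_nonneg z]

lemma green3_le_Hfun (z : ℝ) {a : ℝ} (b c : ℝ) (ha : a ≠ 0) :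
    green3 z a b c ≤ Hfun z (a, b) := by
  have hρ : 0 < Real.sqrt (a ^ 2 + b ^ 2) := Real.sqrt_pos.mpr (by positivity)
  have hr : Real.sqrt (a ^ 2 + b ^ 2) ≤ Real.sqrt (a ^ 2 + b ^ 2 + c ^ 2) :=
    Real.sqrt_le_sqrt (by nlinarith)
  exact aux_le z hρ hr

lemma green3_le_Hfun' (z : ℝ) {a : ℝ} (b c : ℝ) (ha : a ≠ 0) :
    green3 z a b c ≤ Hfun z (a, c) := by
  have : green3 z a b c = green3 z a c b := by
    unfold green3; ring_nf
  rw [this]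
  exact green3_le_Hfun z c b ha

lemma measurable_Hfun (z : ℝ) : Measurable (Hfun z) := by
  unfold Hfun; fun_prop

lemma measurable_green3_pair (z : ℝ) :
    Measurable (fun qp : (ℝ × ℝ) × (ℝ × ℝ) =>
      green3 z (qp.1.1 - qp.2.1) (qp.1.1 - qp.2.2) (qp.1.2 - qp.2.1)) := by
  unfold green3; fun_prop

lemma lint_exp (c : ℝ) (hc : 0 < c) :
    ∫⁻ r in Ioi (0:ℝ), ENNReal.ofReal (Real.exp (-c * r)) = ENNReal.ofReal c⁻¹ := by
  rw [← ofReal_integral_eq_lintegral_ofReal (exp_neg_integrableOn_Ioi 0 hc)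
    (Filter.Eventually.of_forall fun x => (Real.exp_pos _).le)]
  congr 1
  have hderiv : ∀ x ∈ Ici (0:ℝ), HasDerivAt (fun x => -c⁻¹ * Real.exp (-c * x))
      ((fun x => Real.exp (-c * x)) x) x := by
    intro x _
    have h1 : HasDerivAt (fun x : ℝ => -c * x) (-c) x := by
      simpa using (hasDerivAt_id x).const_mul (-c)
    have : HasDerivAt (fun x => -c⁻¹ * Real.exp (-c * x)) (-c⁻¹ * (Real.exp (-c * x) * -c)) x :=
      (h1.exp).const_mul _
    convert this using 1
    field_simp
  have htend : Filter.Tendsto (fun x : ℝ => -c⁻¹ * Real.exp (-c * x)) Filter.atTop (nhds 0) := by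
    have h2 : Filter.Tendsto (fun x : ℝ => Real.exp (-c * x)) Filter.atTop (nhds 0) :=
      Real.tendsto_exp_comp_nhds_zero.mpr
        (Filter.Tendsto.const_mul_atTop_of_neg (neg_neg_iff_pos.mpr hc) Filter.tendsto_id)
    simpa using h2.const_mul (-c⁻¹)
  rw [integral_Ioi_of_hasDerivAt_of_tendsto' hderiv (exp_neg_integrableOn_Ioi 0 hc) htend]
  simp

lemma lintegral_comp_polar (g : ℝ × ℝ → ENNReal) :
    ∫⁻ p, g p = ∫⁻ p in polarCoord.target, ENNReal.ofReal p.1 * g (polarCoord.symm p) := by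
  set B : ℝ × ℝ → ℝ × ℝ →L[ℝ] ℝ × ℝ := fun p =>
    LinearMap.toContinuousLinearMap (Matrix.toLin (Module.Basis.finTwoProd ℝ) (Module.Basis.finTwoProd ℝ)
      !![cos p.2, -p.1 * sin p.2; sin p.2, p.1 * cos p.2])
  have B_det : ∀ p, (B p).det = p.1 := by
    intro p
    conv_rhs => rw [← one_mul p.1, ← cos_sq_add_sin_sq p.2]
    simp only [B, neg_mul, LinearMap.det_toContinuousLinearMap, LinearMap.det_toLin,
      Matrix.det_fin_two_of, sub_neg_eq_add]
    ring
  have hmeas : MeasurableSet polarCoord.target := polarCoord.open_target.measurableSet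
  have hderiv : ∀ p ∈ polarCoord.target, HasFDerivWithinAt polarCoord.symm (B p)
      polarCoord.target p := fun p _ => (hasFDerivAt_polarCoord_symm p).hasFDerivWithinAt
  calc ∫⁻ p, g p = ∫⁻ p in polarCoord.source, g p := by
        rw [← setLIntegral_univ]
        exact setLIntegral_congr polarCoord_source_ae_eq_univ.symm
    _ = ∫⁻ p in polarCoord.symm '' polarCoord.target, g p := by
        rw [polarCoord.symm_image_target_eq_source]
    _ = ∫⁻ p in polarCoord.target, ENNReal.ofReal |(B p).det| * g (polarCoord.symm p) := by
        exact lintegral_image_eq_lintegral_abs_det_fderiv_mul volume hmeas hderiv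
          polarCoord.symm.injOn g
    _ = ∫⁻ p in polarCoord.target, ENNReal.ofReal p.1 * g (polarCoord.symm p) := by
        refine setLIntegral_congr_fun hmeas (fun p hp => ?_)
        rw [B_det, abs_of_pos]
        exact hp.1

lemma lintegral_Hfun (z : ℝ) (hz : 0 < z) :
    ∫⁻ w : ℝ × ℝ, ENNReal.ofReal (Hfun z w) = ENNReal.ofReal (2 * Real.sqrt z)⁻¹ := by
  rw [lintegral_comp_polar (fun w => ENNReal.ofReal (Hfun z w))]
  have hsz : 0 < Real.sqrt z := Real.sqrt_pos.mpr hz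
  have key : ∀ p ∈ polarCoord.target,
      ENNReal.ofReal p.1 * ENNReal.ofReal (Hfun z (polarCoord.symm p))
        = ENNReal.ofReal (Real.exp (-Real.sqrt z * p.1) * (4 * Real.pi)⁻¹) := by
    intro p hp
    have hp1 : 0 < p.1 := hp.1
    have h1 : (p.1 * Real.cos p.2) ^ 2 + (p.1 * Real.sin p.2) ^ 2 = p.1 ^ 2 := by
      have := Real.sin_sq_add_cos_sq p.2; nlinarith [this]
    have h2 : Hfun z (polarCoord.symm p)
        = Real.exp (-Real.sqrt z * p.1) / (4 * Real.pi * p.1) := by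
      simp only [Hfun, polarCoord, OpenPartialHomeomorph.coe_mk_symm, PartialEquiv.coe_symm_mk]
      rw [h1, Real.sqrt_sq hp1.le]
    rw [h2, ← ENNReal.ofReal_mul hp1.le]
    congr 1
    rw [div_eq_mul_inv, mul_inv]
    field_simp
  rw [setLIntegral_congr_fun polarCoord.open_target.measurableSet
    key]
  rw [polarCoord_target, Measure.volume_eq_prod, ← Measure.prod_restrict]
  rw [lintegral_prod _ (by fun_prop)]
  simp only [lintegral_const, Measure.restrict_apply MeasurableSet.univ, Set.univ_inter,
    Real.volume_Ioo]
  have : ∀ r : ℝ, ENNReal.ofReal (Real.exp (-Real.sqrt z * r) * (4 * Real.pi)⁻¹)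
      * ENNReal.ofReal (π - -π)
      = ENNReal.ofReal (Real.exp (-Real.sqrt z * r))
        * ENNReal.ofReal ((4 * Real.pi)⁻¹ * (2 * π)) := by
    intro r
    rw [ENNReal.ofReal_mul (Real.exp_pos _).le, mul_assoc, ← ENNReal.ofReal_mul (by positivity)]
    ring_nf
  simp_rw [this]
  rw [lintegral_mul_const _ (by fun_prop), lint_exp _ hsz, ← ENNReal.ofReal_mul (by positivity)]
  congr 1
  have hπ : Real.pi ≠ 0 := Real.pi_ne_zero
  field_simp
  ring

lemma lintegral_Hfun_row (z : ℝ) (x : ℝ) :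
    ∫⁻ p : ℝ × ℝ, ENNReal.ofReal (Hfun z (x - p.1, x - p.2))
      = ∫⁻ w : ℝ × ℝ, ENNReal.ofReal (Hfun z w) := by
  have h1 : MeasurePreserving (fun t : ℝ => x - t) volume volume := by
    simpa [sub_eq_add_neg] using Measure.measurePreserving_sub_left (volume : Measure ℝ) x
  have h : MeasurePreserving (Prod.map (fun t : ℝ => x - t) (fun t : ℝ => x - t))
      (volume : Measure (ℝ × ℝ)) (volume : Measure (ℝ × ℝ)) := by
    rw [Measure.volume_eq_prod]
    exact h1.prod h1
  exact h.lintegral_comp ((measurable_Hfun z).ennreal_ofReal)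

lemma lintegral_Hfun_col (z : ℝ) (x : ℝ) :
    ∫⁻ q : ℝ × ℝ, ENNReal.ofReal (Hfun z (q.1 - x, q.2 - x))
      = ∫⁻ w : ℝ × ℝ, ENNReal.ofReal (Hfun z w) := by
  have h1 : MeasurePreserving (fun t : ℝ => t - x) volume volume :=
    measurePreserving_sub_right (volume : Measure ℝ) x
  have h : MeasurePreserving (Prod.map (fun t : ℝ => t - x) (fun t : ℝ => t - x))
      (volume : Measure (ℝ × ℝ)) (volume : Measure (ℝ × ℝ)) := by
    rw [Measure.volume_eq_prod]
    exact h1.prod h1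
  exact h.lintegral_comp ((measurable_Hfun z).ennreal_ofReal)

lemma fst_ne_ae (x : ℝ) : ∀ᵐ p : ℝ × ℝ, p.1 ≠ x := by
  have hset : {p : ℝ × ℝ | p.1 = x} = ({x} : Set ℝ) ×ˢ (univ : Set ℝ) := by
    ext p
    simp only [Set.mem_setOf_eq, Set.mem_prod, Set.mem_singleton_iff, Set.mem_univ, and_true]
  have h0 : (volume : Measure (ℝ × ℝ)) {p : ℝ × ℝ | p.1 = x} = 0 := by
    rw [Measure.volume_eq_prod, hset, Measure.prod_prod]
    simp
  rw [ae_iff]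
  simpa using h0

/-- Schur row bound. -/
lemma row_bound (z : ℝ) (hz : 0 < z) (x y : ℝ) :
    ∫⁻ p : ℝ × ℝ, ENNReal.ofReal (green3 z (x - p.1) (x - p.2) (y - p.1))
      ≤ ENNReal.ofReal (2 * Real.sqrt z)⁻¹ := by
  calc ∫⁻ p : ℝ × ℝ, ENNReal.ofReal (green3 z (x - p.1) (x - p.2) (y - p.1))
      ≤ ∫⁻ p : ℝ × ℝ, ENNReal.ofReal (Hfun z (x - p.1, x - p.2)) := by
        refine lintegral_mono_ae ?_
        filter_upwards [fst_ne_ae x] with p hp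
        exact ENNReal.ofReal_le_ofReal
          (green3_le_Hfun z _ _ (sub_ne_zero.mpr (Ne.symm hp)))
    _ = ENNReal.ofReal (2 * Real.sqrt z)⁻¹ := by
        rw [lintegral_Hfun_row, lintegral_Hfun z hz]

/-- Schur column bound. -/
lemma col_bound (z : ℝ) (hz : 0 < z) (x y : ℝ) :
    ∫⁻ q : ℝ × ℝ, ENNReal.ofReal (green3 z (q.1 - x) (q.1 - y) (q.2 - x))
      ≤ ENNReal.ofReal (2 * Real.sqrt z)⁻¹ := by
  calc ∫⁻ q : ℝ × ℝ, ENNReal.ofReal (green3 z (q.1 - x) (q.1 - y) (q.2 - x))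
      ≤ ∫⁻ q : ℝ × ℝ, ENNReal.ofReal (Hfun z (q.1 - x, q.2 - x)) := by
        refine lintegral_mono_ae ?_
        filter_upwards [fst_ne_ae x] with q hq
        exact ENNReal.ofReal_le_ofReal
          (green3_le_Hfun' z _ _ (sub_ne_zero.mpr hq))
    _ = ENNReal.ofReal (2 * Real.sqrt z)⁻¹ := by
        rw [lintegral_Hfun_col, lintegral_Hfun z hz]

end FzAux

open FzAux in
theorem F_z_bounded (z : ℝ) (hz : 0 < z) (f : ℝ × ℝ → ℝ)
    (hf : MemLp f 2 (volume : Measure (ℝ × ℝ))) :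
    MemLp (fun q : ℝ × ℝ =>
        ∫ p : ℝ × ℝ, green3 z (q.1 - p.1) (q.1 - p.2) (q.2 - p.1) * f p)
      2 (volume : Measure (ℝ × ℝ)) ∧
    (∫ q : ℝ × ℝ,
        (∫ p : ℝ × ℝ, green3 z (q.1 - p.1) (q.1 - p.2) (q.2 - p.1) * f p) ^ 2) ^ ((1 : ℝ) / 2)
      ≤ (2 * Real.sqrt z)⁻¹ * (∫ p : ℝ × ℝ, (f p) ^ 2) ^ ((1 : ℝ) / 2) := by
  classical
  set C : ℝ := (2 * Real.sqrt z)⁻¹ with hCdef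
  have hsz : 0 < Real.sqrt z := Real.sqrt_pos.mpr hz
  have hC0 : 0 ≤ C := by positivity
  set F : ℝ × ℝ → ℝ :=
    fun q => ∫ p : ℝ × ℝ, green3 z (q.1 - p.1) (q.1 - p.2) (q.2 - p.1) * f p with hFdef
  have hKm := FzAux.measurable_green3_pair z
  have hfm : AEStronglyMeasurable f volume := hf.1
  have hsnd : AEStronglyMeasurable (fun qp : (ℝ × ℝ) × (ℝ × ℝ) => f qp.2)
      ((volume : Measure (ℝ × ℝ)).prod (volume : Measure (ℝ × ℝ))) :=
    hfm.comp_quasiMeasurePreserving Measure.quasiMeasurePreserving_snd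
  have hFm : AEStronglyMeasurable F volume := by
    have hprod : AEStronglyMeasurable
        (fun qp : (ℝ × ℝ) × (ℝ × ℝ) =>
          green3 z (qp.1.1 - qp.2.1) (qp.1.1 - qp.2.2) (qp.1.2 - qp.2.1) * f qp.2)
        ((volume : Measure (ℝ × ℝ)).prod (volume : Measure (ℝ × ℝ))) :=
      hKm.aestronglyMeasurable.mul hsnd
    exact hprod.integral_prod_right'
  set nf : ℝ × ℝ → ENNReal := fun p => (‖f p‖₊ : ENNReal) with hnfdef
  set K : (ℝ × ℝ) → (ℝ × ℝ) → ENNReal :=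
    fun q p => ENNReal.ofReal (green3 z (q.1 - p.1) (q.1 - p.2) (q.2 - p.1)) with hKdef
  have hnfm : AEMeasurable nf volume := hfm.enorm
  have hKqm : ∀ q, Measurable (K q) := by
    intro q
    exact (hKm.comp (measurable_prodMk_left)).ennreal_ofReal
  -- pointwise bound on `F`
  have hFle : ∀ q, (‖F q‖₊ : ENNReal) ≤ ∫⁻ p, K q p * nf p := by
    intro q
    refine (enorm_integral_le_lintegral_enorm _).trans (le_of_eq ?_)
    refine lintegral_congr fun p => ?_
    have h1 : ‖green3 z (q.1 - p.1) (q.1 - p.2) (q.2 - p.1)‖ₑ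
        = K q p := by
      rw [hKdef, Real.enorm_eq_ofReal_abs,
        abs_of_nonneg (FzAux.green3_nonneg z _ _ _)]
    rw [enorm_mul, h1]; rfl
  -- Cauchy-Schwarz pointwise
  have hCS : ∀ q, (∫⁻ p, K q p * nf p) ^ (2:ℝ)
      ≤ ENNReal.ofReal C * ∫⁻ p, K q p * nf p ^ (2:ℝ) := by
    intro q
    have hconj : Real.HolderConjugate 2 2 := Real.HolderConjugate.two_two
    set s : (ℝ × ℝ) → ENNReal := fun p => (K q p) ^ ((1:ℝ)/2) with hsdef
    have hsm : AEMeasurable s volume := (hKqm q).aemeasurable.pow_const _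
    have hss : ∀ p, s p * s p = K q p := by
      intro p
      rw [hsdef, ← ENNReal.rpow_add_of_nonneg _ _ (by norm_num) (by norm_num)]
      norm_num
    have hs2 : ∀ p, s p ^ (2:ℝ) = K q p := by
      intro p
      rw [hsdef, ← ENNReal.rpow_mul]
      norm_num
    calc (∫⁻ p, K q p * nf p) ^ (2:ℝ)
        = (∫⁻ p, (s * fun p => s p * nf p) p) ^ (2:ℝ) := by
          congr 1
          refine lintegral_congr fun p => ?_
          show K q p * nf p = s p * (s p * nf p)
          rw [← mul_assoc, hss]
      _ ≤ ((∫⁻ p, s p ^ (2:ℝ)) ^ (1/(2:ℝ)) * (∫⁻ p, (s p * nf p) ^ (2:ℝ)) ^ (1/(2:ℝ))) ^ (2:ℝ) :=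
          ENNReal.rpow_le_rpow
            (ENNReal.lintegral_mul_le_Lp_mul_Lq volume hconj hsm (hsm.mul hnfm)) (by norm_num)
      _ = (∫⁻ p, s p ^ (2:ℝ)) * (∫⁻ p, (s p * nf p) ^ (2:ℝ)) := by
          rw [ENNReal.mul_rpow_of_nonneg _ _ (by norm_num), ← ENNReal.rpow_mul,
            ← ENNReal.rpow_mul]
          norm_num
      _ = (∫⁻ p, K q p) * (∫⁻ p, K q p * nf p ^ (2:ℝ)) := by
          congr 1
          · exact lintegral_congr fun p => hs2 p
          · refine lintegral_congr fun p => ?_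
            rw [ENNReal.mul_rpow_of_nonneg _ _ (by norm_num), hs2]
      _ ≤ ENNReal.ofReal C * (∫⁻ p, K q p * nf p ^ (2:ℝ)) :=
          mul_le_mul_left (FzAux.row_bound z hz q.1 q.2) _
  -- the two main lintegral quantities
  set A : ENNReal := ∫⁻ q, (‖F q‖₊ : ENNReal) ^ (2:ℝ) with hAdef
  set Bi : ENNReal := ∫⁻ p, nf p ^ (2:ℝ) with hBdef
  have hBlt : Bi < ⊤ := by
    have h2 := hf.eLpNorm_lt_top
    rw [eLpNorm_eq_lintegral_rpow_enorm_toReal (by norm_num) (by norm_num)] at h2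
    have h3 : (∫⁻ p, nf p ^ (2:ℝ)) ^ ((1:ℝ)/2) < ⊤ := by
      rw [ENNReal.toReal_ofNat] at h2; exact h2
    rw [hBdef]
    exact (ENNReal.rpow_lt_top_iff_of_pos (by norm_num)).mp h3
  have hswapm : AEMeasurable (fun qp : (ℝ × ℝ) × (ℝ × ℝ) => K qp.1 qp.2 * nf qp.2 ^ (2:ℝ))
      ((volume : Measure (ℝ × ℝ)).prod (volume : Measure (ℝ × ℝ))) := by
    refine AEMeasurable.mul ?_ ?_
    · exact (hKm.ennreal_ofReal).aemeasurable
    · exact ((hnfm.comp_quasiMeasurePreserving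
        Measure.quasiMeasurePreserving_snd).pow_const _)
  have hA : A ≤ ENNReal.ofReal C ^ 2 * Bi := by
    have hnf_ne_top : ∀ p, nf p ^ (2:ℝ) ≠ ⊤ :=
      fun p => (ENNReal.rpow_lt_top_of_nonneg (by norm_num) ENNReal.coe_ne_top).ne
    calc A ≤ ∫⁻ q, (∫⁻ p, K q p * nf p) ^ (2:ℝ) :=
          lintegral_mono fun q => ENNReal.rpow_le_rpow (hFle q) (by norm_num)
      _ ≤ ∫⁻ q, ENNReal.ofReal C * ∫⁻ p, K q p * nf p ^ (2:ℝ) := lintegral_mono hCS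
      _ = ENNReal.ofReal C * ∫⁻ q, ∫⁻ p, K q p * nf p ^ (2:ℝ) :=
          lintegral_const_mul' _ _ ENNReal.ofReal_ne_top
      _ = ENNReal.ofReal C * ∫⁻ p, ∫⁻ q, K q p * nf p ^ (2:ℝ) := by
          congr 1
          exact lintegral_lintegral_swap hswapm
      _ = ENNReal.ofReal C * ∫⁻ p, (∫⁻ q, K q p) * nf p ^ (2:ℝ) := by
          congr 1
          exact lintegral_congr fun p => lintegral_mul_const' _ _ (hnf_ne_top p)
      _ ≤ ENNReal.ofReal C * ∫⁻ p, ENNReal.ofReal C * nf p ^ (2:ℝ) := by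
          refine mul_le_mul_right (lintegral_mono fun p => ?_) _
          exact mul_le_mul_left (FzAux.col_bound z hz p.1 p.2) _
      _ = ENNReal.ofReal C ^ 2 * Bi := by
          rw [lintegral_const_mul' _ _ ENNReal.ofReal_ne_top, hBdef]
          ring
  have hAlt : A < ⊤ :=
    lt_of_le_of_lt hA (ENNReal.mul_lt_top
      (ENNReal.pow_lt_top (ENNReal.ofReal_lt_top)) hBlt)
  constructor
  · refine ⟨hFm, ?_⟩
    rw [eLpNorm_eq_lintegral_rpow_enorm_toReal (by norm_num) (by norm_num)]
    have : (∫⁻ q, (‖F q‖₊ : ENNReal) ^ ((2:ENNReal).toReal)) = A := by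
      rw [hAdef]; norm_num
    rw [show (∫⁻ x, ‖F x‖ₑ ^ ((2:ENNReal).toReal)) = A from this]  -- might not typecheck; adjust below
    exact ENNReal.rpow_lt_top_of_nonneg (by norm_num) hAlt.ne
  · have hofF : ∀ (g : ℝ × ℝ → ℝ), ∀ x, ENNReal.ofReal (g x ^ 2) = (‖g x‖₊ : ENNReal) ^ (2:ℝ) := by
      intro g x
      rw [← sq_abs, ENNReal.ofReal_pow (abs_nonneg _), ← Real.enorm_eq_ofReal_abs,
        ← ENNReal.rpow_natCast]
      norm_num
      rfl
    have hFsq : ∫ q, F q ^ 2 = A.toReal := by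
      rw [integral_eq_lintegral_of_nonneg_ae
        (Filter.Eventually.of_forall fun q => sq_nonneg (F q))
        (by have h := hFm.mul hFm; simp only [pow_two]; exact h)]
      congr 1
      exact lintegral_congr fun q => hofF F q
    have hfsq : ∫ p, f p ^ 2 = Bi.toReal := by
      rw [integral_eq_lintegral_of_nonneg_ae
        (Filter.Eventually.of_forall fun p => sq_nonneg (f p))
        (by have h := hfm.mul hfm; simp only [pow_two]; exact h)]
      congr 1
      exact lintegral_congr fun p => hofF f p
    rw [show (∫ q : ℝ × ℝ,
        (∫ p : ℝ × ℝ, green3 z (q.1 - p.1) (q.1 - p.2) (q.2 - p.1) * f p) ^ 2) = ∫ q, F q ^ 2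
        from rfl, hFsq, hfsq]
    have h2 : A.toReal ≤ C ^ 2 * Bi.toReal := by
      have h3 := ENNReal.toReal_mono
        (ENNReal.mul_lt_top (ENNReal.pow_lt_top (ENNReal.ofReal_lt_top)) hBlt).ne hA
      rwa [ENNReal.toReal_mul, ENNReal.toReal_pow, ENNReal.toReal_ofReal hC0] at h3
    calc A.toReal ^ ((1:ℝ)/2) ≤ (C ^ 2 * Bi.toReal) ^ ((1:ℝ)/2) :=
          Real.rpow_le_rpow ENNReal.toReal_nonneg h2 (by norm_num)
      _ = C * Bi.toReal ^ ((1:ℝ)/2) := by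
          rw [Real.mul_rpow (by positivity) ENNReal.toReal_nonneg]
          congr 1
          rw [← Real.rpow_natCast C 2, ← Real.rpow_mul hC0]
          norm_num
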